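/- There are no integers x > y ≥ 2 and n ≥ 1 and odd prime p such that p = (x^m + y^m)/(x + y) and p - 1 = 2*(x^n + y^n)/(x + y) with m = n + 2 (m odd, n odd). Moreover, the only solution in integers x > y ≥ 1 of the system p = (x^m + y^m)/(x+y), p - 1 = 2*(x^n + y^n)/(x+y) with m > n ≥ 1 both odd and p prime is x = 2, y = 1, m = 3, n = 1, p = 3. -/

import Mathlib

/-- The only solution in coprime integers `x > y ≥ 1`, odd `m > n ≥ 1`, `p` prime, of
`p = (x^m + y^m)/(x+y)` and `p - 1 = 2*(x^n + y^n)/(x+y)` is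
`x = 2, y = 1, m = 3, n = 1, p = 3`; in particular there is no such solution with
`y ≥ 2`. -/
theorem stmt_8 (x y m n p : ℕ) (hy : 1 ≤ y) (hxy : y < x) (hcop : Nat.Coprime x y)
    (hn : 1 ≤ n) (hmn : n < m) (hmodd : Odd m) (hnodd : Odd n)
    (hp : p.Prime)
    (h1 : p = (x ^ m + y ^ m) / (x + y))
    (h2 : p - 1 = 2 * ((x ^ n + y ^ n) / (x + y))) :
    x = 2 ∧ y = 1 ∧ m = 3 ∧ n = 1 ∧ p = 3 := by
  have hdm : x + y ∣ x ^ m + y ^ m := hmodd.nat_add_dvd_pow_add_pow x y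
  have hdn : x + y ∣ x ^ n + y ^ n := hnodd.nat_add_dvd_pow_add_pow x y
  have e1 : (x ^ m + y ^ m) / (x + y) * (x + y) = x ^ m + y ^ m := Nat.div_mul_cancel hdm
  have e2 : (x ^ n + y ^ n) / (x + y) * (x + y) = x ^ n + y ^ n := Nat.div_mul_cancel hdn
  have hp2 : 2 ≤ p := hp.two_le
  have hpq : p = 2 * ((x ^ n + y ^ n) / (x + y)) + 1 := by omega
  rw [← h1] at e1
  have key : x ^ m + y ^ m = 2 * (x ^ n + y ^ n) + (x + y) := by
    calc x ^ m + y ^ m = p * (x + y) := e1.symm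
      _ = 2 * ((x ^ n + y ^ n) / (x + y)) * (x + y) + (x + y) := by rw [hpq]; ring
      _ = 2 * ((x ^ n + y ^ n) / (x + y) * (x + y)) + (x + y) := by ring
      _ = 2 * (x ^ n + y ^ n) + (x + y) := by rw [e2]
  -- m ≥ n + 2
  have hm2 : n + 2 ≤ m := by
    rcases hmodd with ⟨a, ha⟩; rcases hnodd with ⟨b, hb⟩; omega
  -- rule out x ≥ 3
  have hx2 : x = 2 := by
    by_contra hx3
    have hx3 : 3 ≤ x := by omega
    have h9 : 9 * x ^ n ≤ x ^ m := by
      calc 9 * x ^ n ≤ x ^ 2 * x ^ n := by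
            have : 9 ≤ x ^ 2 := by nlinarith
            exact Nat.mul_le_mul_right _ this
        _ = x ^ (n + 2) := by ring
        _ ≤ x ^ m := Nat.pow_le_pow_right (by omega) hm2
    have hyx : y ^ n ≤ x ^ n := Nat.pow_le_pow_left (le_of_lt hxy) n
    have hxn : x ≤ x ^ n := Nat.le_self_pow (by omega) x
    have hpos : 0 < x ^ n := Nat.pow_pos (by omega)
    omega
  have hy1 : y = 1 := by omega
  subst hx2; subst hy1
  simp only [one_pow] at key h1
  have h4 : 2 ^ m + 1 = 2 * 2 ^ n + 5 := by omega
  have hn1 : n = 1 := by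
    by_contra hn2
    have hn2 : 2 ≤ n := by omega
    have hb : 4 * 2 ^ n ≤ 2 ^ m := by
      calc 4 * 2 ^ n = 2 ^ (n + 2) := by ring
        _ ≤ 2 ^ m := Nat.pow_le_pow_right (by norm_num) hm2
    have h4n : 4 ≤ 2 ^ n := by
      calc (4:ℕ) = 2 ^ 2 := by norm_num
        _ ≤ 2 ^ n := Nat.pow_le_pow_right (by norm_num) hn2
    omega
  subst hn1
  norm_num at h4
  have hm3 : m = 3 := by
    have : (2:ℕ) ^ m = 2 ^ 3 := by norm_num; omega
    exact Nat.pow_right_injective (le_refl 2) this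
  subst hm3
  norm_num at h1
  exact ⟨rfl, rfl, rfl, rfl, h1⟩
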